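/- Let x_0, x_1, ..., x_N and x* be points in a metric space with d(x_0, x_N) > 0 and d(x_0, x*) > 0, with N ≥ 2. Define η = (Σ_{k=0}^{N-2} d(x_k, x_{k+1}) + d(x_{N-1}, x*)) / d(x_0, x*) and η_sub = (Σ_{k=0}^{N-1} d(x_k, x_{k+1})) / d(x_0, x_N). If η ≥ 1, then (η - η_sub)/η ≤ 2·d(x_N, x*)/d(x_0, x_N). -/

import Mathlib

/-- Suboptimal-endpoint ESL comparison: with
`η = (Σ_{k≤N-2} d(x_k,x_{k+1}) + d(x_{N-1}, x*)) / d(x₀, x*)` and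
`η_sub = (Σ_{k<N} d(x_k,x_{k+1})) / d(x₀, x_N)`, if `η ≥ 1` then
`(η - η_sub)/η ≤ 2 d(x_N, x*) / d(x₀, x_N)`. -/
theorem stmt4 {X : Type*} [MetricSpace X] (N : ℕ) (hN : 2 ≤ N)
    (x : ℕ → X) (xstar : X)
    (h0N : 0 < dist (x 0) (x N)) (h0s : 0 < dist (x 0) xstar)
    (η ηsub : ℝ)
    (hη : η = ((∑ k ∈ Finset.range (N - 1), dist (x k) (x (k + 1))) +
        dist (x (N - 1)) xstar) / dist (x 0) xstar)
    (hηsub : ηsub = (∑ k ∈ Finset.range N, dist (x k) (x (k + 1))) /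
        dist (x 0) (x N))
    (hη1 : 1 ≤ η) :
    (η - ηsub) / η ≤ 2 * dist (x N) xstar / dist (x 0) (x N) := by
  obtain ⟨M, rfl⟩ : ∃ M, N = M + 1 := ⟨N - 1, by omega⟩
  simp only [Nat.add_sub_cancel] at hη
  rw [Finset.sum_range_succ] at hηsub
  set S := ∑ k ∈ Finset.range M, dist (x k) (x (k + 1)) with hS
  have hSnn : 0 ≤ S := Finset.sum_nonneg fun _ _ => dist_nonneg
  have h1 : dist (x 0) (x (M + 1)) ≤ dist (x 0) xstar + dist (x (M + 1)) xstar :=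
    dist_triangle_right _ _ _
  have h2 : dist (x M) xstar ≤ dist (x M) (x (M + 1)) + dist (x (M + 1)) xstar :=
    dist_triangle _ _ _
  have hge : dist (x 0) xstar ≤ S + dist (x M) xstar := by
    rw [hη, le_div_iff₀ h0s] at hη1
    linarith
  have hηpos : 0 < η := lt_of_lt_of_le one_pos hη1
  have hds : 0 ≤ dist (x (M + 1)) xstar := dist_nonneg
  have hlast : 0 ≤ dist (x M) (x (M + 1)) := dist_nonneg
  have hAnn : 0 ≤ dist (x M) xstar := dist_nonneg
  rw [div_le_div_iff₀ hηpos h0N, hη, hηsub]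
  rw [hη] at hηpos
  rw [div_sub_div _ _ (ne_of_gt h0s) (ne_of_gt h0N), div_mul_eq_mul_div,
    div_le_iff₀ (by positivity)]
  have heq : 2 * dist (x (M + 1)) xstar * ((S + dist (x M) xstar) / dist (x 0) xstar) *
      (dist (x 0) xstar * dist (x 0) (x (M + 1))) =
      2 * dist (x (M + 1)) xstar * (S + dist (x M) xstar) * dist (x 0) (x (M + 1)) := by
    field_simp
  rw [heq]
  nlinarith [mul_nonneg (mul_nonneg hds (sub_nonneg.2 hge)) h0N.le,
    mul_nonneg (mul_nonneg h0s.le (sub_nonneg.2 h2)) h0N.le,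
    mul_le_mul_of_nonneg_right (mul_le_mul_of_nonneg_left h1 (by positivity : (0:ℝ) ≤ S + dist (x M) xstar)) h0N.le,
    mul_pos h0s h0N]
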